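/- Let α > 0, l ∈ (0,π), and δ ≥ 0. For a ∈ [0, π−l] let J_a = δ + χ_{[a−l,a+l]} as a function on [−π,π]. Then max over a ∈ [0, π−l] of osc(u_{J_a}) equals Θ_α(l,δ). -/

import Mathlib

open MeasureTheory Real Set Filter

noncomputable def cA (α : ℝ) : ℝ := α / (1 + α * π)

noncomputable def robinG (α x y : ℝ) : ℝ :=
  -(1/2) * cA α * x * y - (1/2) * |x - y| + 1 / (2 * cA α)

/-- Solution of the Robin problem with heat source `f`. -/
noncomputable def robinSol (α : ℝ) (f : ℝ → ℝ) (x : ℝ) : ℝ :=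
  ∫ y in (-π)..π, robinG α x y * f y

/-- The class 𝔉(m,M,s) of heat sources. -/
def memF (m M s : ℝ) (f : ℝ → ℝ) : Prop :=
  MeasureTheory.IntegrableOn f (Set.Icc (-π) π) MeasureTheory.volume ∧
  (∀ᵐ x ∂(MeasureTheory.volume.restrict (Set.Icc (-π) π)), m ≤ f x ∧ f x ≤ M) ∧
  (∫ x in (-π)..π, f x) = 2 * π * s

/-- Temperature gap (oscillation) over `[-π, π]`. -/
noncomputable def osc (u : ℝ → ℝ) : ℝ :=
  sSup (u '' Set.Icc (-π) π) - sInf (u '' Set.Icc (-π) π)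

noncomputable def Hfun (α a l δ : ℝ) : ℝ :=
  (1/2) * ((1 - l * cA α)^2 / (1 + δ) - 1) * a^2 + (l / (1 + α * π)) * a
    + π * l + π^2 * δ / 2 - l^2 / 2

noncomputable def aZero (α l δ : ℝ) : ℝ :=
  (1 + δ) * l / ((1 + α * π) * (δ + 2 * l * cA α - l^2 * (cA α)^2))

noncomputable def Theta (α l δ : ℝ) : ℝ :=
  Hfun α (min (aZero α l δ) (π - l)) l δ

/-! ### Auxiliary material -/

set_option linter.unusedSectionVars false
set_option linter.unusedVariables false

noncomputable def tabs (t : ℝ) : ℝ := t * |t|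

lemma tabs_neg (t : ℝ) : tabs (-t) = - tabs t := by
  simp [tabs]

lemma tabs_of_nonneg {t : ℝ} (h : 0 ≤ t) : tabs t = t^2 := by rw [tabs, abs_of_nonneg h]; ring

lemma tabs_of_nonpos {t : ℝ} (h : t ≤ 0) : tabs t = -t^2 := by rw [tabs, abs_of_nonpos h]; ring

lemma hasDerivAt_tabs (t : ℝ) : HasDerivAt tabs (2 * |t|) t := by
  rcases eq_or_ne t 0 with rfl | ht
  · rw [hasDerivAt_iff_tendsto_slope]
    have h : ∀ s : ℝ, s ≠ 0 → slope tabs 0 s = |s| := by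
      intro s hs
      rw [slope_def_field]; field_simp [tabs]; simp [tabs]
    simp only [abs_zero, mul_zero]
    have := (continuous_abs.tendsto (0:ℝ)).mono_left (nhdsWithin_le_nhds (s := {(0:ℝ)}ᶜ))
    simp only [abs_zero] at this
    exact this.congr' (by filter_upwards [self_mem_nhdsWithin] with s hs using (h s hs).symm)
  · have h1 : HasDerivAt (fun s : ℝ => |s|) (SignType.sign t : ℝ) t := hasDerivAt_abs ht
    have h2 := (hasDerivAt_id t).mul h1
    have h3 : tabs = fun y : ℝ => id y * |y| := by funext y; simp [tabs]
    rw [h3]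
    refine h2.congr_deriv ?_
    rcases ht.lt_or_gt with h | h
    · simp [abs_of_neg h, h]; ring
    · simp [abs_of_pos h, h]; ring

noncomputable def Phi (c x y : ℝ) : ℝ := -(c/4) * x * y^2 - tabs (y - x) / 4 + y / (2*c)

/-- An explicit closed form for the solution. -/
noncomputable def Vc (c a l δ x : ℝ) : ℝ :=
  δ * (π / c - (tabs (π - x) + tabs (π + x)) / 4) - c * a * l * x + l / c
    - (tabs (a + l - x) - tabs (a - l - x)) / 4

lemma hasDerivAt_Phi (c x y : ℝ) :
    HasDerivAt (Phi c x) (-(1/2) * c * x * y - (1/2) * |x - y| + 1 / (2 * c)) y := by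
  have h1 : HasDerivAt (fun y : ℝ => tabs (y - x)) (2 * |y - x|) y := by
    have := (hasDerivAt_tabs (y - x)).comp y ((hasDerivAt_id y).sub_const x)
    rw [mul_one] at this; exact this
  have h2 : HasDerivAt (fun y : ℝ => -(c/4) * x * y^2) (-(c/4) * x * (2*y)) y := by
    simpa using ((hasDerivAt_pow 2 y).const_mul (-(c/4) * x))
  have h3 : HasDerivAt (fun y : ℝ => y / (2*c)) (1 / (2*c)) y := by
    simpa using (hasDerivAt_id y).div_const (2*c)
  have := (h2.sub (h1.div_const 4)).add h3
  refine this.congr_deriv ?_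
  rw [abs_sub_comm x y]; ring

lemma continuous_robinG (α x : ℝ) : Continuous (fun y => robinG α x y) := by
  unfold robinG
  fun_prop

lemma integral_robinG (α x p q : ℝ) :
    ∫ y in p..q, robinG α x y = Phi (cA α) x q - Phi (cA α) x p := by
  apply intervalIntegral.integral_eq_sub_of_hasDerivAt
  · intro y _
    exact hasDerivAt_Phi (cA α) x y
  · exact (continuous_robinG α x).intervalIntegrable p q

lemma robinSol_eq (α l δ a : ℝ) (hα : 0 < α) (hl : 0 < l) (hlπ : l < π)
    (ha0 : 0 ≤ a) (ha1 : a ≤ π - l) (x : ℝ) :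
    robinSol α (fun y => δ + (Set.Icc (a - l) (a + l)).indicator (fun _ => (1:ℝ)) y) x
      = Vc (cA α) a l δ x := by
  have hA : (0:ℝ) < 1 + α * π := by positivity
  have hc : 0 < cA α := div_pos hα hA
  have hsub : Set.Icc (a - l) (a + l) ⊆ Set.Ioc (-π) π := by
    intro y hy
    exact ⟨lt_of_lt_of_le (by linarith) hy.1, le_trans hy.2 (by linarith)⟩
  have hind : (fun y => robinG α x y * (Set.Icc (a-l) (a+l)).indicator (fun _ => (1:ℝ)) y)
      = (Set.Icc (a-l) (a+l)).indicator (fun y => robinG α x y) := by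
    funext y
    by_cases hy : y ∈ Set.Icc (a-l) (a+l) <;> simp [Set.indicator_apply, hy]
  have hI2 : IntervalIntegrable
      (fun y => robinG α x y * (Set.Icc (a-l) (a+l)).indicator (fun _ => (1:ℝ)) y)
      volume (-π) π := by
    rw [hind, intervalIntegrable_iff_integrableOn_Ioc_of_le (by linarith [pi_pos] : -π ≤ π)]
    exact ((continuous_robinG α x).integrableOn_Ioc).indicator measurableSet_Icc
  have hI1 : IntervalIntegrable (fun y => robinG α x y * δ) volume (-π) π :=
    ((continuous_robinG α x).mul continuous_const).intervalIntegrable _ _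
  have split : robinSol α (fun y => δ + (Set.Icc (a - l) (a + l)).indicator (fun _ => (1:ℝ)) y) x
      = (∫ y in (-π)..π, robinG α x y * δ)
        + ∫ y in (-π)..π, robinG α x y * (Set.Icc (a-l) (a+l)).indicator (fun _ => (1:ℝ)) y := by
    rw [robinSol, ← intervalIntegral.integral_add hI1 hI2]
    congr 1; funext y; ring
  have part1 : (∫ y in (-π)..π, robinG α x y * δ) = (Phi (cA α) x π - Phi (cA α) x (-π)) * δ := by
    rw [intervalIntegral.integral_mul_const, integral_robinG]
  have part2 : (∫ y in (-π)..π, robinG α x y * (Set.Icc (a-l) (a+l)).indicator (fun _ => (1:ℝ)) y)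
      = Phi (cA α) x (a+l) - Phi (cA α) x (a-l) := by
    rw [hind, intervalIntegral.integral_of_le (by linarith [pi_pos] : -π ≤ π),
      MeasureTheory.integral_indicator measurableSet_Icc,
      Measure.restrict_restrict measurableSet_Icc,
      Set.inter_eq_self_of_subset_left hsub,
      MeasureTheory.integral_Icc_eq_integral_Ioc,
      ← intervalIntegral.integral_of_le (by linarith : a - l ≤ a + l),
      integral_robinG]
  rw [split, part1, part2]
  have hπx : Phi (cA α) x (-π) = -(cA α/4) * x * π^2 + tabs (π + x) / 4 - π / (2*cA α) := by
    rw [Phi]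
    have h4 : (-π - x) = -(π + x) := by ring
    rw [h4, tabs_neg]; ring
  rw [hπx, Phi, Phi, Phi, Vc]
  have hc' : cA α ≠ 0 := ne_of_gt hc
  field_simp
  ring

/-! ### The oscillation functions in terms of `c` -/

noncomputable def Hc (c l δ a : ℝ) : ℝ :=
  (1/2) * ((1 - l*c)^2 / (1 + δ) - 1) * a^2 + l*(1 - c*π)*a + π*l + π^2*δ/2 - l^2/2
noncomputable def a0c (c l δ : ℝ) : ℝ := (1+δ)*l*(1 - c*π) / (δ + 2*l*c - l^2*c^2)
noncomputable def a1c (c l δ : ℝ) : ℝ := (1+δ)*l / (δ + c*l)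
noncomputable def Dmid (c l δ a x : ℝ) : ℝ :=
  δ*(π^2 - x^2)/2 - c*a*l*(x+π) + l*(a+π) - ((a-x)^2 + l^2)/2
noncomputable def Dr1 (c l δ a x : ℝ) : ℝ := δ*(π^2 - x^2)/2 + l*(x+π)*(1 - c*a)
noncomputable def Dr3 (c l δ a x : ℝ) : ℝ := δ*(π^2 - x^2)/2 - c*a*l*(x+π) + l*(2*a+π-x)
noncomputable def Mv (c l δ a : ℝ) : ℝ := δ*π^2/2 + π*l*(1 - c*a) + l^2*(1 - c*a)^2/(2*δ)
noncomputable def Dfun (c l δ a x : ℝ) : ℝ :=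
  δ*(π^2 - x^2)/2 - c*a*l*(x+π) + l*(a+π) - (tabs (a+l-x) - tabs (a-l-x))/4

section core
variable {c l δ : ℝ} (hc : 0 < c) (hcπ : c*π < 1) (hl : 0 < l) (hlπ : l < π) (hδ : 0 ≤ δ)
include hc hcπ hl hlπ hδ

lemma hlc' : l*c < 1 := by nlinarith [mul_lt_mul_of_pos_right hlπ hc]

lemma hP' : 0 < δ + 2*l*c - l^2*c^2 := by
  nlinarith [mul_pos (mul_pos hl hc) (sub_pos.2 (hlc' hc hcπ hl hlπ hδ))]

lemma a0_pos : 0 < a0c c l δ := by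
  have hp := hP' hc hcπ hl hlπ hδ
  apply div_pos _ hp
  have h1 : (0:ℝ) < 1 + δ := by linarith
  have h2 : (0:ℝ) < 1 - c*π := by linarith
  positivity

lemma a0_le_a1 : a0c c l δ ≤ a1c c l δ := by
  have hp := hP' hc hcπ hl hlπ hδ
  have hlc := hlc' hc hcπ hl hlπ hδ
  have hq : 0 < δ + c*l := by nlinarith [mul_pos hc hl]
  rw [a0c, a1c, div_le_div_iff₀ hp hq]
  have key : (1 - c*π)*(δ + c*l) ≤ δ + 2*l*c - l^2*c^2 := by
    nlinarith [mul_nonneg hδ (mul_pos hc pi_pos).le,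
      mul_nonneg (mul_pos hc hl).le (mul_pos hc pi_pos).le,
      mul_pos (mul_pos hl hc) (sub_pos.2 hlc)]
  have h1l : (0:ℝ) ≤ (1+δ)*l := by positivity
  nlinarith [mul_le_mul_of_nonneg_left key h1l]

lemma vertex (a : ℝ) : Hc c l δ a ≤ Hc c l δ (a0c c l δ) := by
  have hp := hP' hc hcπ hl hlπ hδ
  have h1δ : (0:ℝ) < 1 + δ := by linarith
  have key : Hc c l δ (a0c c l δ) - Hc c l δ a
      = ((δ + 2*l*c - l^2*c^2)/(1+δ))/2 * (a - a0c c l δ)^2 := by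
    unfold Hc a0c; field_simp; ring
  nlinarith [sq_nonneg (a - a0c c l δ), div_pos hp h1δ,
    mul_nonneg (div_pos hp h1δ).le (sq_nonneg (a - a0c c l δ))]

lemma Hmono {a b : ℝ} (hab : a ≤ b) (hb : b ≤ a0c c l δ) : Hc c l δ a ≤ Hc c l δ b := by
  have hp := hP' hc hcπ hl hlπ hδ
  have h1δ : (0:ℝ) < 1 + δ := by linarith
  have key : Hc c l δ b - Hc c l δ a
      = ((δ + 2*l*c - l^2*c^2)/(1+δ)) * ((b - a) * (a0c c l δ - (a+b)/2)) := by
    unfold Hc a0c; field_simp; ring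
  have h2 : (0:ℝ) ≤ (b - a) * (a0c c l δ - (a+b)/2) := by
    apply mul_nonneg (by linarith); linarith
  nlinarith [mul_nonneg (div_pos hp h1δ).le h2]

lemma mid_id (a x : ℝ) : Hc c l δ a - Dmid c l δ a x
    = ((1+δ)*x - a*(1 - l*c))^2 / (2*(1+δ)) := by
  have h1δ : (0:ℝ) < 1 + δ := by linarith
  unfold Hc Dmid; field_simp; ring

lemma mid_ub (a x : ℝ) : Dmid c l δ a x ≤ Hc c l δ a := by
  have h1δ : (0:ℝ) < 1 + δ := by linarith
  have key := mid_id hc hcπ hl hlπ hδ a x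
  have := div_nonneg (sq_nonneg ((1+δ)*x - a*(1 - l*c))) (by linarith : (0:ℝ) ≤ 2*(1+δ))
  linarith

lemma r1_le_Mv {a x : ℝ} (hδpos : 0 < δ) : Dr1 c l δ a x ≤ Mv c l δ a := by
  have key : Mv c l δ a - Dr1 c l δ a x = (δ*x - l*(1 - c*a))^2/(2*δ) := by
    unfold Mv Dr1; field_simp; ring
  have := div_nonneg (sq_nonneg (δ*x - l*(1 - c*a))) (by linarith : (0:ℝ) ≤ 2*δ)
  linarith

lemma Mv_mono {a : ℝ} (hδpos : 0 < δ) (ha : a1c c l δ ≤ a) (haπ : a ≤ π - l) :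
    Mv c l δ a ≤ Mv c l δ (a1c c l δ) := by
  have hq : 0 < δ + c*l := by nlinarith [mul_pos hc hl]
  have key : Mv c l δ (a1c c l δ) - Mv c l δ a
      = c*(a - a1c c l δ)*(π*l + (l^2/(2*δ))*(2 - c*(a + a1c c l δ))) := by
    unfold Mv a1c; field_simp; ring
  have hca : c*a < 1 := by nlinarith [mul_le_mul_of_nonneg_left haπ hc.le]
  have hca1 : c * a1c c l δ ≤ c*a := by nlinarith
  have h2 : (0:ℝ) ≤ π*l + (l^2/(2*δ))*(2 - c*(a + a1c c l δ)) := by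
    have h3 : (0:ℝ) ≤ l^2/(2*δ) := by positivity
    nlinarith [mul_pos pi_pos hl, mul_nonneg h3 (by nlinarith : (0:ℝ) ≤ 2 - c*(a + a1c c l δ))]
  nlinarith [mul_nonneg (mul_nonneg hc.le (by linarith : (0:ℝ) ≤ a - a1c c l δ)) h2]

lemma Mv_a1_eq (hδpos : 0 < δ) :
    Mv c l δ (a1c c l δ) = Dmid c l δ (a1c c l δ) (a1c c l δ - l) := by
  have hq : 0 < δ + c*l := by nlinarith [mul_pos hc hl]
  unfold Mv Dmid a1c; field_simp; ring

lemma H_le_Hmin {a : ℝ} (ha0 : 0 ≤ a) (ha1 : a ≤ π - l) :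
    Hc c l δ a ≤ Hc c l δ (min (a0c c l δ) (π - l)) := by
  rcases le_total (a0c c l δ) (π - l) with h | h
  · rw [min_eq_left h]; exact vertex hc hcπ hl hlπ hδ a
  · rw [min_eq_right h]; exact Hmono hc hcπ hl hlπ hδ ha1 h

lemma core_ub {a x : ℝ} (ha0 : 0 ≤ a) (ha1 : a ≤ π - l) (hx1 : -π ≤ x) (hx2 : x ≤ π) :
    Dfun c l δ a x ≤ Hc c l δ (min (a0c c l δ) (π - l)) := by
  have hHm := H_le_Hmin hc hcπ hl hlπ hδ ha0 ha1
  have hca : c*a < 1 := by nlinarith [mul_le_mul_of_nonneg_left ha1 hc.le]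
  rcases le_total x (a - l) with hr | hr
  · have e1 : Dfun c l δ a x = Dr1 c l δ a x := by
      rw [Dfun, tabs_of_nonneg (by linarith : (0:ℝ) ≤ a+l-x),
        tabs_of_nonneg (by linarith : (0:ℝ) ≤ a-l-x), Dr1]
      ring
    rw [e1]
    rcases le_total (δ*(a-l)) (l*(1 - c*a)) with hcase | hcase
    · have h1 : Dr1 c l δ a x ≤ Dmid c l δ a (a - l) := by
        have key : Dmid c l δ a (a-l) - Dr1 c l δ a x
            = (a-l-x)*((l*(1 - c*a) - δ*(a-l)) + δ*(a-l-x)/2) := by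
          unfold Dmid Dr1; ring
        nlinarith [mul_nonneg (by linarith : (0:ℝ) ≤ a-l-x)
          (by nlinarith [mul_nonneg hδ (by linarith : (0:ℝ) ≤ a-l-x)] :
            (0:ℝ) ≤ (l*(1 - c*a) - δ*(a-l)) + δ*(a-l-x)/2)]
      linarith [mid_ub hc hcπ hl hlπ hδ a (a-l)]
    · have hpos : 0 < l*(1 - c*a) := by nlinarith
      have hδpos : 0 < δ := by
        rcases hδ.lt_or_eq with h | h
        · exact h
        · exfalso; rw [← h] at hcase; simp at hcase; nlinarith
      have ha1c : a1c c l δ ≤ a := by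
        rw [a1c, div_le_iff₀ (by nlinarith [mul_pos hc hl] : 0 < δ + c*l)]
        nlinarith
      have hchain : Dr1 c l δ a x ≤ Hc c l δ (a0c c l δ) :=
        le_trans (r1_le_Mv hc hcπ hl hlπ hδ hδpos)
          (le_trans (Mv_mono hc hcπ hl hlπ hδ hδpos ha1c ha1)
            (le_trans (le_of_eq (Mv_a1_eq hc hcπ hl hlπ hδ hδpos))
              (le_trans (mid_ub hc hcπ hl hlπ hδ _ _) (vertex hc hcπ hl hlπ hδ _))))
      have hmin : min (a0c c l δ) (π - l) = a0c c l δ :=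
        min_eq_left (le_trans (a0_le_a1 hc hcπ hl hlπ hδ) (le_trans ha1c ha1))
      rw [hmin]; exact hchain
  · rcases le_total x (a + l) with hr2 | hr2
    · have e1 : Dfun c l δ a x = Dmid c l δ a x := by
        rw [Dfun, tabs_of_nonneg (by linarith : (0:ℝ) ≤ a+l-x),
          tabs_of_nonpos (by linarith : a-l-x ≤ (0:ℝ)), Dmid]
        ring
      rw [e1]; exact le_trans (mid_ub hc hcπ hl hlπ hδ a x) hHm
    · have e1 : Dfun c l δ a x = Dr3 c l δ a x := by
        rw [Dfun, tabs_of_nonpos (by linarith : a+l-x ≤ (0:ℝ)),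
          tabs_of_nonpos (by linarith : a-l-x ≤ (0:ℝ)), Dr3]
        ring
      rw [e1]
      have h1 : Dr3 c l δ a x ≤ Dmid c l δ a (a + l) := by
        have key : Dmid c l δ a (a+l) - Dr3 c l δ a x
            = (x-a-l)*(δ*(x+a+l)/2 + c*a*l + l) := by
          unfold Dmid Dr3; ring
        have hf : (0:ℝ) ≤ δ*(x+a+l)/2 + c*a*l + l := by
          have h1 : (0:ℝ) ≤ δ*(x+a+l) := mul_nonneg hδ (by linarith)
          have h2 : (0:ℝ) ≤ c*a*l := mul_nonneg (mul_nonneg hc.le ha0) hl.le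
          linarith
        nlinarith [mul_nonneg (by linarith : (0:ℝ) ≤ x-a-l) hf]
      linarith [mid_ub hc hcπ hl hlπ hδ a (a+l)]

lemma core_lb {a x : ℝ} (ha0 : 0 ≤ a) (ha1 : a ≤ π - l) (hx1 : -π ≤ x) (hx2 : x ≤ π) :
    0 ≤ Dfun c l δ a x := by
  have hca : c*a < 1 := by nlinarith [mul_le_mul_of_nonneg_left ha1 hc.le]
  have hδx : (0:ℝ) ≤ δ*(π^2 - x^2)/2 := by
    have : (0:ℝ) ≤ π^2 - x^2 := by nlinarith
    positivity
  rcases le_total x (a - l) with hr | hr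
  · rw [Dfun, tabs_of_nonneg (by linarith : (0:ℝ) ≤ a+l-x),
      tabs_of_nonneg (by linarith : (0:ℝ) ≤ a-l-x)]
    nlinarith [mul_nonneg (mul_nonneg hl.le (by linarith : (0:ℝ) ≤ x + π))
      (by linarith : (0:ℝ) ≤ 1 - c*a)]
  · rcases le_total x (a + l) with hr2 | hr2
    · rw [Dfun, tabs_of_nonneg (by linarith : (0:ℝ) ≤ a+l-x),
        tabs_of_nonpos (by linarith : a-l-x ≤ (0:ℝ))]
      have hcx : c*(x+π) ≤ 2*(c*π) := by nlinarith [mul_le_mul_of_nonneg_left hx2 hc.le]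
      nlinarith [mul_nonneg hl.le (by linarith : (0:ℝ) ≤ π - l - a),
        mul_nonneg (mul_nonneg hl.le ha0) (by linarith : (0:ℝ) ≤ 1 - c*π),
        mul_nonneg (mul_nonneg hl.le ha0) (by linarith : (0:ℝ) ≤ 2*(c*π) - c*(x+π)),
        mul_nonneg (by linarith : (0:ℝ) ≤ l - a + x) (by linarith : (0:ℝ) ≤ l + a - x)]
    · rw [Dfun, tabs_of_nonpos (by linarith : a+l-x ≤ (0:ℝ)),
        tabs_of_nonpos (by linarith : a-l-x ≤ (0:ℝ))]
      have hcx : c*(x+π) ≤ 2*(c*π) := by nlinarith [mul_le_mul_of_nonneg_left hx2 hc.le]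
      nlinarith [mul_nonneg hl.le (by linarith : (0:ℝ) ≤ π - x),
        mul_nonneg (mul_nonneg hl.le ha0) (by linarith : (0:ℝ) ≤ 2 - c*(x+π))]

lemma Vc_sub {a x : ℝ} (ha0 : 0 ≤ a) (hx1 : -π ≤ x) (hx2 : x ≤ π) :
    Vc c a l δ x - Vc c a l δ (-π) = Dfun c l δ a x := by
  have hπ := pi_pos
  have hVπ : Vc c a l δ (-π)
      = δ * (π / c - ((2*π)^2 + 0) / 4) + c * a * l * π + l / c
        - ((a + l + π)^2 - (a - l + π)^2) / 4 := by
    rw [Vc]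
    rw [show π - (-π) = 2*π by ring, show π + (-π) = (0:ℝ) by ring,
      show a + l - (-π) = a + l + π by ring, show a - l - (-π) = a - l + π by ring,
      tabs_of_nonneg (by linarith : (0:ℝ) ≤ 2*π), tabs_of_nonneg (le_refl (0:ℝ)),
      tabs_of_nonneg (by linarith : (0:ℝ) ≤ a + l + π),
      tabs_of_nonneg (by linarith : (0:ℝ) ≤ a - l + π)]
    ring
  rw [hVπ, Vc, Dfun,
    tabs_of_nonneg (by linarith : (0:ℝ) ≤ π - x),
    tabs_of_nonneg (by linarith : (0:ℝ) ≤ π + x)]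
  ring

end core

/-! ### Bridges between the `α`- and `c`-formulations -/

lemma cA_pos {α : ℝ} (hα : 0 < α) : 0 < cA α := div_pos hα (by positivity)

lemma cA_pi_lt {α : ℝ} (hα : 0 < α) : cA α * π < 1 := by
  rw [cA, div_mul_eq_mul_div, div_lt_one (by positivity)]
  linarith

lemma Hfun_eq {α : ℝ} (hα : 0 < α) (a l δ : ℝ) :
    Hfun α a l δ = Hc (cA α) l δ a := by
  have hA : (0:ℝ) < 1 + α * π := by positivity
  have h1 : l*(1 - cA α*π) = l / (1+α*π) := by
    rw [cA]; field_simp; ring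
  rw [Hfun, Hc, ← h1]

lemma aZero_eq {α l δ : ℝ} (hα : 0 < α) (hl : 0 < l) (hlπ : l < π) (hδ : 0 ≤ δ) :
    aZero α l δ = a0c (cA α) l δ := by
  have hA : (0:ℝ) < 1 + α * π := by positivity
  have hc := cA_pos hα
  have hcπ := cA_pi_lt hα
  have hlc : l * cA α < 1 := by nlinarith [mul_lt_mul_of_pos_right hlπ hc]
  have hp : 0 < δ + 2*l*cA α - l^2*(cA α)^2 := by
    nlinarith [mul_pos (mul_pos hl hc) (sub_pos.2 hlc)]
  rw [aZero, a0c, div_eq_div_iff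
    (ne_of_gt (by positivity : (0:ℝ) < (1 + α * π) * (δ + 2 * l * cA α - l ^ 2 * cA α ^ 2)))
    (ne_of_gt hp)]
  have h1 : (1:ℝ) - cA α*π = 1 / (1+α*π) := by rw [cA]; field_simp; ring
  rw [h1]; field_simp

lemma Theta_eq {α l δ : ℝ} (hα : 0 < α) (hl : 0 < l) (hlπ : l < π) (hδ : 0 ≤ δ) :
    Theta α l δ = Hc (cA α) l δ (min (a0c (cA α) l δ) (π - l)) := by
  rw [Theta, aZero_eq hα hl hlπ hδ, Hfun_eq hα]

/-- Lemma 3 (maximum of the oscillation over the position `a`). -/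
theorem lemma3_max_osc (α l δ : ℝ) (hα : 0 < α) (hl : l ∈ Set.Ioo 0 π) (hδ : 0 ≤ δ) :
    IsGreatest
      ((fun a => osc (robinSol α
          (fun x => δ + (Set.Icc (a - l) (a + l)).indicator (fun _ => (1:ℝ)) x))) ''
        Set.Icc 0 (π - l))
      (Theta α l δ) := by
  obtain ⟨hl0, hlπ⟩ := hl
  have hπ := pi_pos
  set c := cA α with hcdef
  have hc : 0 < c := cA_pos hα
  have hcπ : c * π < 1 := cA_pi_lt hα
  have hlc : l*c < 1 := hlc' hc hcπ hl0 hlπ hδ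
  have h1δ : (0:ℝ) < 1 + δ := by linarith
  -- image sets
  have himg : ∀ a : ℝ, 0 ≤ a → a ≤ π - l →
      (robinSol α (fun x => δ + (Set.Icc (a - l) (a + l)).indicator (fun _ => (1:ℝ)) x))
        '' Set.Icc (-π) π = (Vc c a l δ) '' Set.Icc (-π) π := by
    intro a ha0 ha1
    exact Set.image_congr fun x _ => robinSol_eq α l δ a hα hl0 hlπ ha0 ha1 x
  -- generic least element
  have hleast : ∀ a : ℝ, 0 ≤ a → a ≤ π - l →
      IsLeast ((Vc c a l δ) '' Set.Icc (-π) π) (Vc c a l δ (-π)) := by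
    intro a ha0 ha1
    constructor
    · exact Set.mem_image_of_mem _ (by constructor <;> linarith)
    · rintro v ⟨x, hx, rfl⟩
      have := core_lb hc hcπ hl0 hlπ hδ ha0 ha1 hx.1 hx.2
      have hsub := Vc_sub hc hcπ hl0 hlπ hδ ha0 hx.1 hx.2 (a := a) (x := x)
      linarith
  have hosc_ub : ∀ a : ℝ, 0 ≤ a → a ≤ π - l →
      osc (robinSol α (fun x => δ + (Set.Icc (a - l) (a + l)).indicator (fun _ => (1:ℝ)) x))
        ≤ Theta α l δ := by
    intro a ha0 ha1
    rw [osc, himg a ha0 ha1, (hleast a ha0 ha1).csInf_eq]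
    have hub : sSup ((Vc c a l δ) '' Set.Icc (-π) π) ≤ Vc c a l δ (-π) + Theta α l δ := by
      apply csSup_le ((Set.nonempty_Icc.2 (by linarith)).image _)
      rintro v ⟨x, hx, rfl⟩
      have h1 := core_ub hc hcπ hl0 hlπ hδ ha0 ha1 hx.1 hx.2
      have hsub := Vc_sub hc hcπ hl0 hlπ hδ ha0 hx.1 hx.2 (a := a) (x := x)
      rw [Theta_eq hα hl0 hlπ hδ]
      linarith
    linarith
  constructor
  · -- membership: the maximum is attained at a* = min a0c (π - l)
    set astar := min (a0c c l δ) (π - l) with hastar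
    have ha0' : 0 < a0c c l δ := a0_pos hc hcπ hl0 hlπ hδ
    have hastar0 : 0 ≤ astar := le_min ha0'.le (by linarith)
    have hastar1 : astar ≤ π - l := min_le_right _ _
    refine ⟨astar, ⟨hastar0, hastar1⟩, ?_⟩
    -- the maximizing point
    set xstar := astar * (1 - l*c) / (1 + δ) with hxstar
    have hx0 : 0 ≤ xstar := by
      apply div_nonneg _ h1δ.le
      nlinarith
    have hxle : xstar ≤ astar := by
      rw [hxstar, div_le_iff₀ h1δ]
      nlinarith [mul_le_mul_of_nonneg_left
        (by nlinarith [mul_pos hl0 hc] : 1 - l*c ≤ 1 + δ) hastar0]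
    have hxstar_mem : xstar ∈ Set.Icc (-π) π := by
      constructor <;> linarith
    -- a* ≤ a1c, so xstar is in the middle region
    have ha1c : astar ≤ a1c c l δ :=
      le_trans (min_le_left _ _) (a0_le_a1 hc hcπ hl0 hlπ hδ)
    have hq : 0 < δ + c*l := by nlinarith [mul_pos hc hl0]
    have hreg : astar - l ≤ xstar := by
      have h2 : astar * (δ + c*l) ≤ (1+δ)*l := by
        rw [a1c] at ha1c
        calc astar * (δ + c*l) ≤ ((1+δ)*l / (δ + c*l)) * (δ + c*l) := by
              apply mul_le_mul_of_nonneg_right ha1c hq.le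
          _ = (1+δ)*l := by field_simp
      rw [hxstar, le_div_iff₀ h1δ]
      nlinarith
    -- value at xstar
    have hDx : Dfun c l δ astar xstar = Hc c l δ astar := by
      have e1 : Dfun c l δ astar xstar = Dmid c l δ astar xstar := by
        rw [Dfun, tabs_of_nonneg (by linarith : (0:ℝ) ≤ astar + l - xstar),
          tabs_of_nonpos (by linarith : astar - l - xstar ≤ (0:ℝ)), Dmid]
        ring
      have e2 : (1+δ)*xstar - astar*(1 - l*c) = 0 := by
        rw [hxstar, mul_comm ((1:ℝ)+δ), div_mul_cancel₀ _ (ne_of_gt h1δ)]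
        ring
      have e3 := mid_id hc hcπ hl0 hlπ hδ astar xstar
      rw [e2] at e3
      simp at e3
      linarith [e1, e3]
    have hgreat : IsGreatest ((Vc c astar l δ) '' Set.Icc (-π) π) (Vc c astar l δ xstar) := by
      constructor
      · exact Set.mem_image_of_mem _ hxstar_mem
      · rintro v ⟨x, hx, rfl⟩
        have h1 := core_ub hc hcπ hl0 hlπ hδ hastar0 hastar1 hx.1 hx.2
        have hsub := Vc_sub hc hcπ hl0 hlπ hδ hastar0 hx.1 hx.2 (a := astar) (x := x)
        have hsub2 := Vc_sub hc hcπ hl0 hlπ hδ hastar0 hxstar_mem.1 hxstar_mem.2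
          (a := astar) (x := xstar)
        have : Hc c l δ (min (a0c c l δ) (π - l)) = Dfun c l δ astar xstar := by
          rw [hDx, hastar]
        linarith
    show osc _ = Theta α l δ
    rw [osc, himg astar hastar0 hastar1, hgreat.csSup_eq, (hleast astar hastar0 hastar1).csInf_eq]
    have hsub2 := Vc_sub hc hcπ hl0 hlπ hδ hastar0 hxstar_mem.1 hxstar_mem.2
      (a := astar) (x := xstar)
    rw [Theta_eq hα hl0 hlπ hδ]
    rw [← hastar, ← hDx]
    linarith
  · rintro v ⟨a, ⟨ha0, ha1⟩, rfl⟩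
    exact hosc_ub a ha0 ha1
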